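/- Let T be an aperiodic Borel automorphism of a standard Borel space (X, 𝓑) and let F₁, …, Fₙ be Borel subsets of X. Then there exists an aperiodic smooth Borel automorphism S of X such that S(Fᵢ) = T(Fᵢ) for every i = 1, …, n. -/

import Mathlib

open MeasureTheory Set

/-- `T` is a Borel automorphism: both `T` and its inverse are measurable. -/
def IsBorelAuto {X : Type*} [MeasurableSpace X] (T : Equiv.Perm X) : Prop :=
  Measurable T ∧ Measurable T.symm

/-- `T` is aperiodic: no point is periodic. -/
def IsAperiodic {X : Type*} (T : Equiv.Perm X) : Prop :=
  ∀ (x : X) (n : ℤ), n ≠ 0 → (T ^ n) x ≠ x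

/-- `T` is smooth: some Borel set meets every `T`-orbit in exactly one point. -/
def IsSmooth {X : Type*} [MeasurableSpace X] (T : Equiv.Perm X) : Prop :=
  ∃ A : Set X, MeasurableSet A ∧ ∀ x : X, ∃! a, a ∈ A ∧ ∃ n : ℤ, (T ^ n) x = a

private lemma apow_inj {X : Type*} (T : Equiv.Perm X) (hTa : IsAperiodic T) {a b : ℤ} {x : X}
    (h : (T ^ a) x = (T ^ b) x) : a = b := by
  by_contra hne
  have h1 : (T ^ (-b + a)) x = x := by
    rw [zpow_add, Equiv.Perm.mul_apply, h, ← Equiv.Perm.mul_apply, ← zpow_add]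
    simp
  exact hTa x (-b + a) (by omega) h1

open Relation in
private lemma exists_cocycle {X : Type*} (T : Equiv.Perm X) (hTa : IsAperiodic T)
    (D₀ : Set X) : ∃ g : X → ℤ, ∀ x ∈ D₀, g (T x) = g x + 1 := by
  classical
  set r : X → X → Prop := fun a b => a ∈ D₀ ∧ b = T a with hr
  have reach : ∀ x y : X, EqvGen r x y → ∃ m : ℤ, (T ^ m) x = y := by
    intro x y h
    induction h with
    | rel a b hab => exact ⟨1, by rw [zpow_one, hab.2]⟩
    | refl a => exact ⟨0, rfl⟩
    | symm a b _ ih =>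
        obtain ⟨m, hm⟩ := ih
        refine ⟨-m, ?_⟩
        rw [← hm, ← Equiv.Perm.mul_apply, ← zpow_add]
        simp
    | trans a b c _ _ ih1 ih2 =>
        obtain ⟨m, hm⟩ := ih1; obtain ⟨k, hk⟩ := ih2
        exact ⟨k + m, by rw [zpow_add, Equiv.Perm.mul_apply, hm, hk]⟩
  letI s : Setoid X := EqvGen.setoid r
  have hrel : ∀ x : X, ∃ m : ℤ, (T ^ m) ((Quotient.mk s x).out) = x := fun x =>
    reach _ _ (Quotient.mk_out x)
  choose g hg using hrel
  refine ⟨g, fun x hx => ?_⟩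
  have hout : (Quotient.mk s (T x)).out = (Quotient.mk s x).out := by
    congr 1
    have hrel2 : EqvGen r (T x) x := EqvGen.symm _ _ (EqvGen.rel x (T x) ⟨hx, rfl⟩)
    exact Quotient.sound hrel2
  have h1 := hg (T x)
  rw [hout] at h1
  have h2 : (T ^ (g x + 1)) ((Quotient.mk s x).out) = T x := by
    rw [add_comm, zpow_add, zpow_one, Equiv.Perm.mul_apply, hg x]
  exact apow_inj T hTa (h1.trans h2.symm)

private lemma exists_piece_maps {X : Type*} [MeasurableSpace X] [StandardBorelSpace X]
    {D R : Set X} (hD : MeasurableSet D) (hR : MeasurableSet R)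
    (hDc : ¬ D.Countable) (hRc : ¬ R.Countable) :
    ∃ p q : X → X, Measurable p ∧ Measurable q ∧
      (∀ x ∈ D, p x ∈ R ∧ q (p x) = x) ∧ (∀ y ∈ R, q y ∈ D ∧ p (q y) = y) := by
  classical
  haveI := hD.standardBorel
  haveI := hR.standardBorel
  have e : ↥D ≃ᵐ ↥R := PolishSpace.measurableEquivOfNotCountable
    (by rwa [countable_coe_iff]) (by rwa [countable_coe_iff])
  refine ⟨fun x => if h : x ∈ D then (e ⟨x, h⟩ : X) else x,
          fun y => if h : y ∈ R then (e.symm ⟨y, h⟩ : X) else y, ?_, ?_, ?_, ?_⟩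
  · exact Measurable.dite (measurable_subtype_coe.comp e.measurable) measurable_subtype_coe hD
  · exact Measurable.dite (measurable_subtype_coe.comp e.symm.measurable) measurable_subtype_coe hR
  · intro x hx
    simp only [dif_pos hx]
    refine ⟨(e ⟨x, hx⟩).2, ?_⟩
    rw [dif_pos (e ⟨x, hx⟩).2]
    have h3 : (⟨((e ⟨x, hx⟩ : ↥R) : X), (e ⟨x, hx⟩).2⟩ : ↥R) = e ⟨x, hx⟩ := rfl
    rw [h3, MeasurableEquiv.symm_apply_apply]
  · intro y hy
    simp only [dif_pos hy]
    refine ⟨(e.symm ⟨y, hy⟩).2, ?_⟩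
    rw [dif_pos (e.symm ⟨y, hy⟩).2]
    have h3 : (⟨((e.symm ⟨y, hy⟩ : ↥D) : X), (e.symm ⟨y, hy⟩).2⟩ : ↥D) = e.symm ⟨y, hy⟩ := rfl
    rw [h3, MeasurableEquiv.apply_symm_apply]

private lemma exists_fiber_fun {X : Type*} [MeasurableSpace X] [StandardBorelSpace X]
    {Q : Set X} (hQ : MeasurableSet Q) (hQc : ¬ Q.Countable) :
    ∃ u : X → ℤ, Measurable u ∧ ∀ k : ℤ, ¬ (Q ∩ u ⁻¹' {k}).Countable := by
  classical
  haveI := hQ.standardBorel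
  have e : ↥Q ≃ᵐ ℝ := PolishSpace.measurableEquivOfNotCountable
    (by rwa [countable_coe_iff])
    (fun h => Cardinal.not_countable_real (@Set.countable_univ ℝ h))
  refine ⟨fun x => if h : x ∈ Q then ⌊e ⟨x, h⟩⌋ else 0,
    Measurable.dite (Int.measurable_floor.comp e.measurable) measurable_const hQ, ?_⟩
  intro k hC
  have hinj : Function.Injective (fun r : ℝ => ((e.symm r : ↥Q) : X)) :=
    fun a b hab => e.symm.injective (Subtype.val_injective hab)
  have hsub : Ico (k : ℝ) ((k : ℝ) + 1) ⊆
      (fun r : ℝ => ((e.symm r : ↥Q) : X)) ⁻¹' (Q ∩ (fun x => if h : x ∈ Q then ⌊e ⟨x, h⟩⌋ else 0) ⁻¹' {k}) := by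
    intro r hr
    refine ⟨(e.symm r).2, ?_⟩
    simp only [mem_preimage, mem_singleton_iff, dif_pos (e.symm r).2]
    have h3 : (⟨((e.symm r : ↥Q) : X), (e.symm r).2⟩ : ↥Q) = e.symm r := rfl
    rw [h3, MeasurableEquiv.apply_symm_apply]
    exact Int.floor_eq_iff.2 ⟨hr.1, hr.2⟩
  have hcnt : (Ico (k : ℝ) ((k : ℝ) + 1)).Countable := (hC.preimage hinj).mono hsub
  have hmk := Cardinal.mk_Ico_real (show (k : ℝ) < (k : ℝ) + 1 by linarith)
  have hle : (Cardinal.mk ↥(Ico (k : ℝ) ((k : ℝ) + 1))) ≤ Cardinal.aleph0 :=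
    Cardinal.mk_le_aleph0_iff.2 (countable_coe_iff.2 hcnt)
  rw [hmk] at hle
  exact Cardinal.aleph0_lt_continuum.not_ge hle

private lemma glue_pieces {X : Type*} [MeasurableSpace X] {Γ : Type*} [Countable Γ]
    (φA φB : X → Γ)
    (hφAm : ∀ γ, MeasurableSet {x | φA x = γ})
    (hφBm : ∀ γ, MeasurableSet {y | φB y = γ})
    (ψ : X → ℤ) (hψ : Measurable ψ)
    (p q : Γ → ℤ → X → X)
    (hpm : ∀ γ k, Measurable (p γ k)) (hqm : ∀ γ k, Measurable (q γ k))
    (hfwd : ∀ γ k x, φA x = γ → ψ x = k →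
      (φB (p γ k x) = γ ∧ ψ (p γ k x) = k + 1 ∧ q γ k (p γ k x) = x))
    (hbwd : ∀ γ k y, φB y = γ → ψ y = k + 1 →
      (φA (q γ k y) = γ ∧ ψ (q γ k y) = k ∧ p γ k (q γ k y) = y)) :
    ∃ S : Equiv.Perm X, IsBorelAuto S ∧ IsAperiodic S ∧ IsSmooth S ∧
      ∀ y, φA (S.symm y) = φB y := by
  classical
  have hli : Function.LeftInverse (fun y => q (φB y) (ψ y - 1) y) (fun x => p (φA x) (ψ x) x) := by
    intro x
    obtain ⟨h1, h2, h3⟩ := hfwd (φA x) (ψ x) x rfl rfl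
    show q (φB (p (φA x) (ψ x) x)) (ψ (p (φA x) (ψ x) x) - 1) (p (φA x) (ψ x) x) = x
    rw [h1, h2, add_sub_cancel_right]
    exact h3
  have hri : Function.RightInverse (fun y => q (φB y) (ψ y - 1) y) (fun x => p (φA x) (ψ x) x) := by
    intro y
    obtain ⟨h1, h2, h3⟩ := hbwd (φB y) (ψ y - 1) y rfl (by omega)
    show p (φA (q (φB y) (ψ y - 1) y)) (ψ (q (φB y) (ψ y - 1) y)) (q (φB y) (ψ y - 1) y) = y
    rw [h1, h2]
    exact h3
  refine ⟨⟨fun x => p (φA x) (ψ x) x, fun y => q (φB y) (ψ y - 1) y, hli, hri⟩, ⟨?_, ?_⟩, ?_, ?_, ?_⟩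
  · -- Measurable S
    intro M hM
    have hset : (fun x => p (φA x) (ψ x) x) ⁻¹' M =
        ⋃ γ, ⋃ k, ({x | φA x = γ} ∩ ψ ⁻¹' {k} ∩ (p γ k) ⁻¹' M) := by
      ext x
      simp only [mem_preimage, mem_iUnion, mem_inter_iff, mem_setOf_eq, mem_singleton_iff]
      constructor
      · intro h; exact ⟨φA x, ψ x, ⟨rfl, rfl⟩, h⟩
      · rintro ⟨γ, k, ⟨⟨h1, h2⟩, h3⟩⟩; rwa [h1, h2]
    show MeasurableSet ((fun x => p (φA x) (ψ x) x) ⁻¹' M)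
    rw [hset]
    exact MeasurableSet.iUnion fun γ => MeasurableSet.iUnion fun k =>
      ((hφAm γ).inter (hψ (measurableSet_singleton k))).inter (hpm γ k hM)
  · -- Measurable S.symm
    intro M hM
    have hset : (fun y => q (φB y) (ψ y - 1) y) ⁻¹' M =
        ⋃ γ, ⋃ k, ({y | φB y = γ} ∩ ψ ⁻¹' {k} ∩ (q γ (k - 1)) ⁻¹' M) := by
      ext y
      simp only [mem_preimage, mem_iUnion, mem_inter_iff, mem_setOf_eq, mem_singleton_iff]
      constructor
      · intro h; exact ⟨φB y, ψ y, ⟨rfl, rfl⟩, h⟩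
      · rintro ⟨γ, k, ⟨⟨h1, h2⟩, h3⟩⟩; rwa [h1, h2]
    show MeasurableSet ((fun y => q (φB y) (ψ y - 1) y) ⁻¹' M)
    rw [hset]
    exact MeasurableSet.iUnion fun γ => MeasurableSet.iUnion fun k =>
      ((hφBm γ).inter (hψ (measurableSet_singleton k))).inter (hqm γ (k - 1) hM)
  pick_goal 3
  · -- the image condition
    intro y
    exact (hbwd (φB y) (ψ y - 1) y rfl (by omega)).1
  -- remaining: IsAperiodic, IsSmooth; both follow from the shift property
  all_goals {
    have hkey1 : ∀ x : X,
        ψ ((⟨fun x => p (φA x) (ψ x) x, fun y => q (φB y) (ψ y - 1) y, hli, hri⟩ :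
          Equiv.Perm X) x) = ψ x + 1 := fun x => (hfwd (φA x) (ψ x) x rfl rfl).2.1
    generalize (⟨fun x => p (φA x) (ψ x) x, fun y => q (φB y) (ψ y - 1) y, hli, hri⟩ :
          Equiv.Perm X) = S at hkey1 ⊢
    have hkey2 : ∀ y : X, ψ (S.symm y) = ψ y - 1 := by
      intro y
      have := hkey1 (S.symm y)
      rw [Equiv.apply_symm_apply] at this
      omega
    have hzpow : ∀ (m : ℤ) (x : X), ψ ((S ^ m) x) = ψ x + m := by
      intro m
      induction m using Int.induction_on with
      | zero => intro x; simp
      | succ i ih =>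
          intro x
          have hstep : (S ^ ((i : ℤ) + 1)) x = (S ^ (i : ℤ)) (S x) := by
            rw [zpow_add_one, Equiv.Perm.mul_apply]
          rw [hstep, ih (S x), hkey1 x]; ring
      | pred i ih =>
          intro x
          have hstep : (S ^ (-(i : ℤ) - 1)) x = (S ^ (-(i : ℤ))) (S.symm x) := by
            rw [zpow_sub_one, Equiv.Perm.mul_apply, Equiv.Perm.inv_def]
          rw [hstep, ih (S.symm x), hkey2 x]; ring
    first
    | -- IsAperiodic
      (exact fun x m hm hfix => hm (by have := hzpow m x; rw [hfix] at this; omega))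
    | -- IsSmooth
      (refine ⟨ψ ⁻¹' {0}, hψ (measurableSet_singleton 0), fun x => ?_⟩
       refine ⟨(S ^ (-ψ x)) x, ⟨?_, ⟨-ψ x, rfl⟩⟩, ?_⟩
       · have := hzpow (-ψ x) x
         simp only [mem_preimage, mem_singleton_iff]
         omega
       · rintro b ⟨hb, m, rfl⟩
         have h1 := hzpow m x
         have hb2 : ψ ((S ^ m) x) = 0 := hb
         have hmeq : m = -ψ x := by omega
         rw [hmeq])
  }

/-- every weak neighborhood of an aperiodic automorphism contains
an aperiodic smooth automorphism. -/
theorem aperiodic_smooth_in_weak_nbhd {X : Type*} [MeasurableSpace X]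
    [StandardBorelSpace X]
    (T : Equiv.Perm X) (hT : IsBorelAuto T) (hTa : IsAperiodic T)
    (n : ℕ) (F : Fin n → Set X) (hF : ∀ i, MeasurableSet (F i)) :
    ∃ S : Equiv.Perm X, IsBorelAuto S ∧ IsAperiodic S ∧ IsSmooth S ∧
      ∀ i, (⇑S) '' F i = (⇑T) '' F i := by
  classical
  set φ : X → (Fin n → Bool) := fun x i => decide (x ∈ F i) with hφdef
  have hφF : ∀ (x : X) (i : Fin n), φ x i = true ↔ x ∈ F i := by
    intro x i
    simp [hφdef]
  have hAmeas : ∀ γ : Fin n → Bool, MeasurableSet {x | φ x = γ} := by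
    intro γ
    have hset : {x | φ x = γ} = ⋂ i, (if γ i = true then F i else (F i)ᶜ) := by
      ext x
      simp only [mem_setOf_eq, mem_iInter, funext_iff]
      constructor
      · intro hxy i
        have hi := hxy i
        by_cases hb : γ i = true
        · rw [if_pos hb]; exact (hφF x i).1 (hi.trans hb)
        · rw [if_neg hb]; intro hxF
          exact hb (by rw [← hi]; exact (hφF x i).2 hxF)
      · intro hxy i
        by_cases hb : γ i = true
        · have hx := hxy i; rw [if_pos hb] at hx
          rw [hb]; exact (hφF x i).2 hx
        · have hx := hxy i; rw [if_neg hb] at hx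
          have hb' : γ i = false := Bool.eq_false_iff.mpr hb
          rw [hb']
          cases hc : φ x i
          · rfl
          · exact absurd ((hφF x i).1 hc) hx
    rw [hset]
    exact MeasurableSet.iInter fun i => by
      by_cases hb : γ i = true
      · rw [if_pos hb]; exact hF i
      · rw [if_neg hb]; exact (hF i).compl
  have hBmeas : ∀ γ : Fin n → Bool, MeasurableSet {y | φ (T.symm y) = γ} :=
    fun γ => hT.2 (hAmeas γ)
  have hBimg : ∀ γ : Fin n → Bool, {y | φ (T.symm y) = γ} = ⇑T '' {x | φ x = γ} := by
    intro γ; rw [Equiv.image_eq_preimage_symm]; rfl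
  have hBctb : ∀ γ : Fin n → Bool,
      {x | φ x = γ}.Countable → {y | φ (T.symm y) = γ}.Countable := by
    intro γ h; rw [hBimg γ]; exact h.image _
  have hABunc : ∀ γ : Fin n → Bool,
      ¬{x | φ x = γ}.Countable → ¬{y | φ (T.symm y) = γ}.Countable := by
    intro γ h hB
    apply h
    have hAeq : {x | φ x = γ} = ⇑T.symm '' {y | φ (T.symm y) = γ} := by
      rw [hBimg γ, Equiv.symm_image_image]
    rw [hAeq]; exact hB.image _
  set K : Set X := ⋃ γ ∈ {γ : Fin n → Bool | {x | φ x = γ}.Countable},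
      ({x | φ x = γ} ∪ {y | φ (T.symm y) = γ}) with hKdef
  have hKc : K.Countable :=
    Set.Countable.biUnion (Set.to_countable _) (fun γ hγ => Set.Countable.union hγ (hBctb γ hγ))
  have hKm : MeasurableSet K := hKc.measurableSet
  have hAK : ∀ x : X, {z | φ z = φ x}.Countable → x ∈ K := by
    intro x h
    exact mem_biUnion h (Or.inl rfl)
  have hTK : ∀ x : X, {z | φ z = φ x}.Countable → T x ∈ K := by
    intro x h
    refine mem_biUnion h (Or.inr ?_)
    show φ (T.symm (T x)) = φ x
    rw [Equiv.symm_apply_apply]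
  obtain ⟨g, hg⟩ := exists_cocycle T hTa {x | {z | φ z = φ x}.Countable}
  have hufun : ∀ γ δ : Fin n → Bool, ∃ u : X → ℤ, Measurable u ∧
      (¬ (({x | φ x = γ} ∩ {y | φ (T.symm y) = δ}) \ K).Countable →
        ∀ k : ℤ, ¬ ((({x | φ x = γ} ∩ {y | φ (T.symm y) = δ}) \ K) ∩ u ⁻¹' {k}).Countable) := by
    intro γ δ
    by_cases hcnt : (({x | φ x = γ} ∩ {y | φ (T.symm y) = δ}) \ K).Countable
    · exact ⟨fun _ => 0, measurable_const, fun h => absurd hcnt h⟩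
    · obtain ⟨u, hum, huf⟩ := exists_fiber_fun (((hAmeas γ).inter (hBmeas δ)).diff hKm) hcnt
      exact ⟨u, hum, fun _ => huf⟩
  choose u humeas hufib using hufun
  set ψ : X → ℤ := fun x => if x ∈ K then g x else u (φ x) (φ (T.symm x)) x with hψdef
  have hψK : ∀ x ∈ K, ψ x = g x := fun x hx => if_pos hx
  have hψQ : ∀ x : X, x ∉ K → ψ x = u (φ x) (φ (T.symm x)) x := fun x hx => if_neg hx
  have hψmeas : Measurable ψ := by
    apply measurable_to_countable'
    intro m
    have hset : ψ ⁻¹' {m} = (K ∩ {x | g x = m}) ∪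
        (Kᶜ ∩ ⋃ γ, ⋃ δ, ({x | φ x = γ} ∩ {y | φ (T.symm y) = δ} ∩ (u γ δ) ⁻¹' {m})) := by
      ext x
      simp only [mem_preimage, mem_singleton_iff, mem_union, mem_inter_iff, mem_compl_iff,
        mem_iUnion, mem_setOf_eq]
      by_cases hx : x ∈ K
      · rw [hψK x hx]; simp [hx]
      · rw [hψQ x hx]
        constructor
        · intro h
          exact Or.inr ⟨hx, φ x, φ (T.symm x), ⟨⟨rfl, rfl⟩, h⟩⟩
        · rintro (⟨hK, _⟩ | ⟨_, γ, δ, ⟨⟨h1, h2⟩, h3⟩⟩)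
          · exact absurd hK hx
          · rwa [h1, h2]
    rw [hset]
    refine MeasurableSet.union ((hKc.mono inter_subset_left).measurableSet) ?_
    exact hKm.compl.inter (MeasurableSet.iUnion fun γ => MeasurableSet.iUnion fun δ =>
      ((hAmeas γ).inter (hBmeas δ)).inter (humeas γ δ (measurableSet_singleton m)))
  have hcoc : ∀ x : X, {z | φ z = φ x}.Countable → ψ (T x) = ψ x + 1 := by
    intro x h
    rw [hψK x (hAK x h), hψK (T x) (hTK x h)]
    exact hg x h
  have huncD : ∀ γ : Fin n → Bool, ¬{x | φ x = γ}.Countable → ∀ k : ℤ,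
      ¬ ({x | φ x = γ} ∩ ψ ⁻¹' {k}).Countable := by
    intro γ hγ k
    have h1 : ¬ ({x | φ x = γ} \ K).Countable := by
      intro hc
      apply hγ
      refine Set.Countable.mono (fun x hx => ?_) (hc.union hKc)
      by_cases h : x ∈ K
      · exact Or.inr h
      · exact Or.inl ⟨hx, h⟩
    have h2 : {x | φ x = γ} \ K =
        ⋃ δ, (({x | φ x = γ} ∩ {y | φ (T.symm y) = δ}) \ K) := by
      ext x
      simp only [mem_diff, mem_iUnion, mem_inter_iff, mem_setOf_eq]
      constructor
      · rintro ⟨hA, hK⟩; exact ⟨φ (T.symm x), ⟨⟨hA, rfl⟩, hK⟩⟩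
      · rintro ⟨δ, ⟨⟨hA, _⟩, hK⟩⟩; exact ⟨hA, hK⟩
    obtain ⟨δ, hδ⟩ : ∃ δ, ¬ (({x | φ x = γ} ∩ {y | φ (T.symm y) = δ}) \ K).Countable := by
      by_contra hcc
      push_neg at hcc
      refine h1 ?_
      rw [h2]
      exact Set.countable_iUnion (fun δ => hcc δ)
    intro hc
    refine hufib γ δ hδ k ?_
    refine Set.Countable.mono ?_ hc
    rintro x ⟨⟨⟨hA, hB⟩, hK⟩, hu⟩
    refine ⟨hA, ?_⟩
    show ψ x = k
    have hA' : φ x = γ := hA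
    have hB' : φ (T.symm x) = δ := hB
    have hu' : u γ δ x = k := hu
    rw [hψQ x hK, hA', hB']
    exact hu'
  have huncR : ∀ γ : Fin n → Bool, ¬{x | φ x = γ}.Countable → ∀ k : ℤ,
      ¬ ({y | φ (T.symm y) = γ} ∩ ψ ⁻¹' {k}).Countable := by
    intro γ hγ k
    have hγB := hABunc γ hγ
    have h1 : ¬ ({y | φ (T.symm y) = γ} \ K).Countable := by
      intro hc
      apply hγB
      refine Set.Countable.mono (fun x hx => ?_) (hc.union hKc)
      by_cases h : x ∈ K
      · exact Or.inr h
      · exact Or.inl ⟨hx, h⟩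
    have h2 : {y | φ (T.symm y) = γ} \ K =
        ⋃ δ, (({x | φ x = δ} ∩ {y | φ (T.symm y) = γ}) \ K) := by
      ext x
      simp only [mem_diff, mem_iUnion, mem_inter_iff, mem_setOf_eq]
      constructor
      · rintro ⟨hB, hK⟩; exact ⟨φ x, ⟨⟨rfl, hB⟩, hK⟩⟩
      · rintro ⟨δ, ⟨⟨_, hB⟩, hK⟩⟩; exact ⟨hB, hK⟩
    obtain ⟨δ, hδ⟩ : ∃ δ, ¬ (({x | φ x = δ} ∩ {y | φ (T.symm y) = γ}) \ K).Countable := by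
      by_contra hcc
      push_neg at hcc
      refine h1 ?_
      rw [h2]
      exact Set.countable_iUnion (fun δ => hcc δ)
    intro hc
    refine hufib δ γ hδ k ?_
    refine Set.Countable.mono ?_ hc
    rintro x ⟨⟨⟨hA, hB⟩, hK⟩, hu⟩
    refine ⟨hB, ?_⟩
    show ψ x = k
    have hA' : φ x = δ := hA
    have hB' : φ (T.symm x) = γ := hB
    have hu' : u δ γ x = k := hu
    rw [hψQ x hK, hA', hB']
    exact hu'
  have hpieces : ∀ (γ : Fin n → Bool) (k : ℤ), ∃ p q : X → X, Measurable p ∧ Measurable q ∧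
      (∀ x : X, φ x = γ → ψ x = k → (φ (T.symm (p x)) = γ ∧ ψ (p x) = k + 1 ∧ q (p x) = x)) ∧
      (∀ y : X, φ (T.symm y) = γ → ψ y = k + 1 → (φ (q y) = γ ∧ ψ (q y) = k ∧ p (q y) = y)) := by
    intro γ k
    by_cases hγ : {x | φ x = γ}.Countable
    · refine ⟨T, T.symm, hT.1, hT.2, ?_, ?_⟩
      · intro x hφx hψx
        refine ⟨by rw [Equiv.symm_apply_apply]; exact hφx, ?_, Equiv.symm_apply_apply T x⟩
        rw [hcoc x (by rw [hφx]; exact hγ), hψx]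
      · intro y hφy hψy
        refine ⟨hφy, ?_, Equiv.apply_symm_apply T y⟩
        have hstep := hcoc (T.symm y) (by rw [hφy]; exact hγ)
        rw [Equiv.apply_symm_apply, hψy] at hstep
        omega
    · obtain ⟨p, q, hpm, hqm, h1, h2⟩ := exists_piece_maps
        ((hAmeas γ).inter (hψmeas (measurableSet_singleton k)))
        ((hBmeas γ).inter (hψmeas (measurableSet_singleton (k + 1))))
        (huncD γ hγ k) (huncR γ hγ (k + 1))
      refine ⟨p, q, hpm, hqm, ?_, ?_⟩
      · intro x hφx hψx
        obtain ⟨hmem, hqp⟩ := h1 x ⟨hφx, hψx⟩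
        exact ⟨hmem.1, hmem.2, hqp⟩
      · intro y hφy hψy
        obtain ⟨hmem, hpq⟩ := h2 y ⟨hφy, hψy⟩
        exact ⟨hmem.1, hmem.2, hpq⟩
  choose p q hpm hqm hfwd hbwd using hpieces
  obtain ⟨S, hS1, hS2, hS3, hS4⟩ :=
    glue_pieces φ (fun y => φ (T.symm y)) hAmeas hBmeas ψ hψmeas p q hpm hqm hfwd hbwd
  refine ⟨S, hS1, hS2, hS3, ?_⟩
  intro i
  rw [Equiv.image_eq_preimage_symm, Equiv.image_eq_preimage_symm]
  ext y
  simp only [mem_preimage]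
  have h := congrFun (hS4 y) i
  constructor
  · intro hy
    exact (hφF (T.symm y) i).1 (by rw [← h]; exact (hφF (S.symm y) i).2 hy)
  · intro hy
    exact (hφF (S.symm y) i).1 (by rw [h]; exact (hφF (T.symm y) i).2 hy)
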